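/- Let m > 1 and α > m−1, p = mα/(α−(m−1)), q = (m−1)/(α−(m−1)). For θ = θ(i) = mα/(α − (m−1)(i^{-1}+1)), there exists C > 0 such that for all sufficiently large integers i, i^{q−θ} · Σ_{k=i+1}^{2i} 2^{k(p−θ)} ≤ C · i^{(1−m)α/(α−m+1)}. -/
import Mathlib


open Finset Filter

theorem geometric_sum_estimate_two (m α : ℝ) (hm : 1 < m) (hα : m - 1 < α) :
    ∃ C > (0:ℝ), ∀ᶠ i : ℕ in atTop,
      (i : ℝ) ^ ((m - 1) / (α - (m - 1)) - m * α / (α - (m - 1) * (1 / (i : ℝ) + 1))) *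
          ∑ k ∈ Finset.Icc (i + 1) (2 * i),
            (2 : ℝ) ^ ((k : ℝ) *
              (m * α / (α - (m - 1)) - m * α / (α - (m - 1) * (1 / (i : ℝ) + 1)))) ≤
        C * (i : ℝ) ^ ((1 - m) * α / (α - m + 1)) := by
  have hD1 : (0:ℝ) < α - (m - 1) := by linarith
  have hα0 : (0:ℝ) < α := by linarith
  have hmα : (0:ℝ) < m * α := by positivity
  refine ⟨1, one_pos, ?_⟩
  rw [eventually_atTop]
  refine ⟨⌈(m - 1) / (α - (m - 1))⌉₊ + 1, fun i hi => ?_⟩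
  have hi1 : 1 ≤ i := le_trans (Nat.le_add_left 1 _) hi
  have hI1 : (1:ℝ) ≤ (i : ℝ) := by exact_mod_cast hi1
  have hI0 : (0:ℝ) < (i : ℝ) := by linarith
  -- i > (m-1)/(α-(m-1))
  have hiBig : (m - 1) / (α - (m - 1)) < (i : ℝ) := by
    calc (m - 1) / (α - (m - 1)) ≤ (⌈(m - 1) / (α - (m - 1))⌉₊ : ℝ) := Nat.le_ceil _
    _ < (i : ℝ) := by exact_mod_cast Nat.lt_of_lt_of_le (Nat.lt_succ_self _) hi
  have hD2 : (0:ℝ) < α - (m - 1) * (1 / (i : ℝ) + 1) := by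
    have h1 : (m - 1) / (i : ℝ) < α - (m - 1) := (div_lt_iff₀ hI0).mpr (by
      have := (div_lt_iff₀ hD1).mp hiBig
      nlinarith)
    have : (m - 1) * (1 / (i : ℝ) + 1) = (m - 1) / (i : ℝ) + (m - 1) := by ring
    rw [this]; linarith
  have hD2le : α - (m - 1) * (1 / (i : ℝ) + 1) ≤ α - (m - 1) := by
    have h1 : 0 < (m - 1) / (i : ℝ) := div_pos (by linarith) hI0
    have : (m - 1) * (1 / (i : ℝ) + 1) = (m - 1) / (i : ℝ) + (m - 1) := by ring
    rw [this]; linarith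
  set p : ℝ := m * α / (α - (m - 1)) with hp
  set θ : ℝ := m * α / (α - (m - 1) * (1 / (i : ℝ) + 1)) with hθ
  set q : ℝ := (m - 1) / (α - (m - 1)) with hq
  have hpθ : p ≤ θ := by
    rw [hp, hθ]
    exact div_le_div_of_nonneg_left hmα.le hD2 hD2le
  -- each term ≤ 1
  have hsum : ∑ k ∈ Finset.Icc (i + 1) (2 * i), (2:ℝ) ^ ((k : ℝ) * (p - θ)) ≤ (i : ℝ) := by
    calc ∑ k ∈ Finset.Icc (i + 1) (2 * i), (2:ℝ) ^ ((k : ℝ) * (p - θ))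
        ≤ ∑ k ∈ Finset.Icc (i + 1) (2 * i), (1:ℝ) := by
          refine Finset.sum_le_sum fun k _ => ?_
          apply Real.rpow_le_one_of_one_le_of_nonpos one_le_two
          exact mul_nonpos_of_nonneg_of_nonpos (Nat.cast_nonneg k) (by linarith)
      _ = (i : ℝ) := by
          have hc : 2 * i + 1 - (i + 1) = i := by omega
          rw [Finset.sum_const, Nat.card_Icc, hc, nsmul_eq_mul, mul_one]
  have hpow : (0:ℝ) ≤ (i : ℝ) ^ (q - θ) := Real.rpow_nonneg hI0.le _
  have key : (i : ℝ) ^ (q - θ) * ∑ k ∈ Finset.Icc (i + 1) (2 * i), (2:ℝ) ^ ((k : ℝ) * (p - θ))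
      ≤ (i : ℝ) ^ ((1 - m) * α / (α - m + 1)) := by
    calc (i : ℝ) ^ (q - θ) * ∑ k ∈ Finset.Icc (i + 1) (2 * i), (2:ℝ) ^ ((k : ℝ) * (p - θ))
        ≤ (i : ℝ) ^ (q - θ) * (i : ℝ) := mul_le_mul_of_nonneg_left hsum hpow
      _ = (i : ℝ) ^ (q - θ + 1) := (Real.rpow_add_one hI0.ne' _).symm
      _ ≤ (i : ℝ) ^ ((1 - m) * α / (α - m + 1)) := by
          apply Real.rpow_le_rpow_of_exponent_le hI1
          have heq : (1 - m) * α / (α - m + 1) = q + 1 - p := by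
            rw [hq, hp]
            have h2 : α - m + 1 = α - (m - 1) := by ring
            rw [h2]
            field_simp
            ring
          rw [heq]; linarith
  simpa using key
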